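/- Let h, m, n, k ∈ ℕ, let 𝒜 = {p_1, ..., p_k} be a set of integral polynomials, and let a_1 be a nonzero integer. Then there exists N ∈ ℕ such that for every (m,n)-type colouring Δ of {1,...,N}, at least one of the following holds: (i) there exist a ∈ ℤ and d ≠ 0 such that {a, a+p_1(d), ..., a+p_k(d)} ⊆ {1,...,N} and this set is monochromatic with respect to Δ; or (ii) there exist a' ∈ ℤ and d' > h such that {a', a' + a_1·d'} ⊆ {1,...,N} and this two-element set is fully-rainbow with respect to Δ. -/
import Mathlib

namespace PVDW
open Polynomial
open scoped Classical

open Polynomial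

/-! ### A single Dershowitz–Manna step on multisets of naturals, and its well-foundedness -/

def DMlt (M' M : Multiset ℕ) : Prop :=
  ∃ x Y, x ∈ M ∧ M' = M.erase x + Y ∧ ∀ y ∈ Y, y < x

lemma acc_cons (x : ℕ) : ∀ M : Multiset ℕ, Acc DMlt M → Acc DMlt (x ::ₘ M) := by
  induction x using Nat.strong_induction_on with
  | _ x ihx =>
    intro M hM
    induction hM with
    | intro M hM ihM =>
      constructor
      intro N hN
      obtain ⟨z, Y, hz, hNe, hY⟩ := hN
      by_cases hzx : z = x
      · subst hzx
        rw [Multiset.erase_cons_head] at hNe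
        subst hNe
        have key : ∀ Y : Multiset ℕ, (∀ y ∈ Y, y < z) → Acc DMlt (M + Y) := by
          intro Y
          induction Y using Multiset.induction with
          | empty => intro _; simpa using Acc.intro M hM
          | cons y Y ihY =>
            intro hY'
            have h1 : Acc DMlt (M + Y) := ihY fun y hy => hY' y (Multiset.mem_cons_of_mem hy)
            have h2 : Acc DMlt (y ::ₘ (M + Y)) :=
              ihx y (hY' y (Multiset.mem_cons_self y Y)) (M + Y) h1
            simpa [Multiset.add_cons] using h2
        exact key Y hY
      · have hzM : z ∈ M := by
          rcases Multiset.mem_cons.1 hz with h | h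
          · exact absurd h hzx
          · exact h
        have herase : (x ::ₘ M).erase z = x ::ₘ M.erase z :=
          Multiset.erase_cons_tail M (fun h => hzx h.symm)
        have hNe' : N = x ::ₘ (M.erase z + Y) := by
          rw [hNe, herase, Multiset.cons_add]
        rw [hNe']
        exact ihM (M.erase z + Y) ⟨z, Y, hzM, rfl, hY⟩

lemma dm_wf : WellFounded DMlt := by
  constructor
  intro M
  induction M using Multiset.induction with
  | empty =>
    constructor
    intro N hN
    obtain ⟨z, Y, hz, _, _⟩ := hN
    exact absurd hz (by simp)
  | cons x M ih => exact acc_cons x M ih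


open Polynomial

noncomputable def sc (B : ℤ) (q : ℤ[X]) : ℤ[X] :=
  q.sum fun i a => C (a * B ^ (i - 1)) * X ^ i

lemma sc_coeff (B : ℤ) (q : ℤ[X]) (j : ℕ) : (sc B q).coeff j = q.coeff j * B ^ (j - 1) := by
  rw [sc, Polynomial.sum, finset_sum_coeff]
  simp only [coeff_C_mul, coeff_X_pow, mul_ite, mul_one, mul_zero]
  rw [Finset.sum_ite_eq q.support j (fun i => q.coeff i * B ^ (i - 1))]
  split_ifs with h
  · rfl
  · rw [Polynomial.notMem_support_iff.1 h, zero_mul]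

lemma sc_eval (B : ℤ) (q : ℤ[X]) (hq : q.eval 0 = 0) (x : ℤ) :
    B * (sc B q).eval x = q.eval (B * x) := by
  have h0 : q.coeff 0 = 0 := by rw [coeff_zero_eq_eval_zero, hq]
  rw [sc, Polynomial.sum, eval_finset_sum, Finset.mul_sum]
  conv_rhs => rw [eval_eq_sum, Polynomial.sum]
  refine Finset.sum_congr rfl fun i hi => ?_
  have hi1 : 1 ≤ i := by
    rcases Nat.eq_zero_or_pos i with h | h
    · exact absurd (h ▸ Polynomial.mem_support_iff.1 hi) (by simp [h0])
    · exact h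
  have hpow : B * B ^ (i - 1) = B ^ i := by
    have : i - 1 + 1 = i := Nat.succ_pred_eq_of_pos hi1
    calc B * B ^ (i - 1) = B ^ (i - 1 + 1) := by rw [pow_succ]; ring
      _ = B ^ i := by rw [this]
  simp only [eval_mul, eval_C, eval_pow, eval_X, mul_pow]
  calc B * (q.coeff i * B ^ (i - 1) * x ^ i)
      = (B * B ^ (i - 1)) * (q.coeff i * x ^ i) := by ring
    _ = q.coeff i * (B ^ i * x ^ i) := by rw [hpow]; ring

lemma sc_eval_zero (B : ℤ) (q : ℤ[X]) (hq : q.eval 0 = 0) : (sc B q).eval 0 = 0 := by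
  rw [← coeff_zero_eq_eval_zero, sc_coeff, coeff_zero_eq_eval_zero, hq, zero_mul]

lemma sc_natDegree (B : ℤ) (q : ℤ[X]) (hB : B ≠ 0) (hq : q ≠ 0) :
    (sc B q).natDegree = q.natDegree := by
  apply le_antisymm
  · rw [natDegree_le_iff_coeff_eq_zero]
    intro N hN
    rw [sc_coeff, coeff_eq_zero_of_natDegree_lt hN, zero_mul]
  · apply le_natDegree_of_ne_zero
    rw [sc_coeff]
    exact mul_ne_zero (by rw [coeff_natDegree]; exact leadingCoeff_ne_zero.2 hq)
      (pow_ne_zero _ hB)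

lemma sc_leadingCoeff (B : ℤ) (q : ℤ[X]) (hB : B ≠ 0) (hq : q ≠ 0) :
    (sc B q).leadingCoeff = q.leadingCoeff * B ^ (q.natDegree - 1) := by
  rw [leadingCoeff, sc_natDegree B q hB hq, sc_coeff, coeff_natDegree]

lemma sc_ne_zero (B : ℤ) (q : ℤ[X]) (hB : B ≠ 0) (hq : q ≠ 0) : sc B q ≠ 0 := by
  intro h
  have := sc_leadingCoeff B q hB hq
  rw [h, leadingCoeff_zero] at this
  exact (mul_ne_zero (leadingCoeff_ne_zero.2 hq) (pow_ne_zero _ hB)) this.symm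

noncomputable def shift (D : ℤ) (f : ℤ[X]) : ℤ[X] := f.comp (X + C D) - C (f.eval D)

lemma shift_eval (D x : ℤ) (f : ℤ[X]) : (shift D f).eval x = f.eval (x + D) - f.eval D := by
  simp [shift, eval_comp]

lemma shift_eval_zero (D : ℤ) (f : ℤ[X]) : (shift D f).eval 0 = 0 := by
  simp [shift_eval]

lemma shift_natDegree (D : ℤ) (f : ℤ[X]) : (shift D f).natDegree = f.natDegree := by
  rw [shift, natDegree_sub_C, natDegree_comp, natDegree_X_add_C, mul_one]

lemma shift_leadingCoeff (D : ℤ) (f : ℤ[X]) (hf : f.natDegree ≠ 0) :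
    (shift D f).leadingCoeff = f.leadingCoeff := by
  have h1 : (f.comp (X + C D)).natDegree = f.natDegree := by
    rw [natDegree_comp, natDegree_X_add_C, mul_one]
  rw [leadingCoeff, shift_natDegree, shift, coeff_sub, coeff_C, if_neg hf, sub_zero, ← h1,
    coeff_natDegree, leadingCoeff_comp (by rw [natDegree_X_add_C]; exact one_ne_zero),
    leadingCoeff_X_add_C, one_pow, mul_one]

lemma shift_ne_zero (D : ℤ) (f : ℤ[X]) (hf : f.natDegree ≠ 0) : shift D f ≠ 0 := by
  intro h
  have := shift_natDegree D f
  rw [h, natDegree_zero] at this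
  exact hf this.symm

lemma degree_sub_shift_lt (D : ℤ) (g : ℤ[X]) (hgd : g.natDegree ≠ 0) :
    (g - shift D g).degree < g.degree := by
  have hg : g ≠ 0 := fun h => hgd (by rw [h, natDegree_zero])
  apply degree_sub_lt
  · rw [degree_eq_natDegree hg, degree_eq_natDegree (shift_ne_zero D g hgd), shift_natDegree]
  · exact hg
  · exact (shift_leadingCoeff D g hgd).symm

lemma natDegree_sub_shift_lt (D : ℤ) (g : ℤ[X]) (hgd : g.natDegree ≠ 0) :
    (g - shift D g).natDegree < g.natDegree := by
  by_cases h : g - shift D g = 0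
  · rw [h, natDegree_zero]; exact Nat.pos_of_ne_zero hgd
  · have := degree_sub_shift_lt D g hgd
    rw [degree_eq_natDegree h, degree_eq_natDegree (fun hh => hgd (by rw [hh, natDegree_zero]))]
      at this
    exact_mod_cast this

lemma polyBound (f : ℤ[X]) (R : ℤ) (hR : 0 ≤ R) :
    ∃ K : ℤ, 0 ≤ K ∧ ∀ x : ℤ, |x| ≤ R → |f.eval x| ≤ K := by
  refine ⟨∑ i ∈ Finset.range (f.natDegree + 1), |f.coeff i| * R ^ i,
    Finset.sum_nonneg fun i _ => mul_nonneg (abs_nonneg _) (pow_nonneg hR _), fun x hx => ?_⟩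
  rw [eval_eq_sum_range' (Nat.lt_succ_self _)]
  refine le_trans (Finset.abs_sum_le_sum_abs _ _) (Finset.sum_le_sum fun i _ => ?_)
  rw [abs_mul, abs_pow]
  exact mul_le_mul_of_nonneg_left (pow_le_pow_left₀ (abs_nonneg x) hx i) (abs_nonneg _)

noncomputable def Hfam (G' : Finset ℤ[X]) (g : ℤ[X]) (B Db : ℤ) : Finset ℤ[X] :=
  insert 0 (((G'.erase g).image fun f => sc B f) ∪
    (((Finset.Icc (1:ℤ) Db) ×ˢ (G'.erase g)).image fun x =>
      sc B (g + shift x.1 x.2 - shift x.1 g)))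

def PVb (G : Finset ℤ[X]) : Prop :=
  ∀ (κ : Type) [Fintype κ], ∃ N : ℕ, ∀ χ : ℤ → κ, ∃ a d : ℤ,
    0 < d ∧ d ≤ (N : ℤ) ∧ (∀ f ∈ G, a + f.eval d ∈ Set.Icc (1:ℤ) (N:ℤ)) ∧
    ∀ f ∈ G, ∀ f' ∈ G, χ (a + f.eval d) = χ (a + f'.eval d)

section Step

variable (G' : Finset ℤ[X]) (g : ℤ[X]) {κ : Type} [Fintype κ]

def WIN (M : ℤ) (χ : ℤ → κ) : Prop :=
  ∃ a d : ℤ, 0 < d ∧ d ≤ M ∧ (∀ f ∈ G', a + f.eval d ∈ Set.Icc (1:ℤ) M) ∧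
    ∀ f ∈ G', ∀ f' ∈ G', χ (a + f.eval d) = χ (a + f'.eval d)

def STRUCT (s : ℕ) (M Db : ℤ) (χ : ℤ → κ) : Prop :=
  ∃ (a₀ : ℤ) (D : Fin s → ℤ) (c : Fin s → κ), Function.Injective c ∧
    a₀ ∈ Set.Icc (1:ℤ) M ∧ ∀ t : Fin s, 0 < D t ∧ D t ≤ Db ∧
      ∀ f ∈ G'.erase g, (a₀ + f.eval (D t) - g.eval (D t) ∈ Set.Icc (1:ℤ) M ∧
        χ (a₀ + f.eval (D t) - g.eval (D t)) = c t)

set_option linter.unusedSectionVars false in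
lemma win_shift (M M' T : ℤ) (hT : 0 ≤ T) (hM : T + M ≤ M') (χ : ℤ → κ)
    (h : WIN G' M (fun z => χ (T + z))) : WIN G' M' χ := by
  obtain ⟨a, d, hd0, hdM, hpts, hmono⟩ := h
  refine ⟨T + a, d, hd0, by omega, fun f hf => ?_, fun f hf f' hf' => ?_⟩
  · have := hpts f hf
    simp only [Set.mem_Icc] at this ⊢
    omega
  · have := hmono f hf f' hf'
    simp only at this
    have e1 : T + a + eval d f = T + (a + eval d f) := by ring
    have e2 : T + a + eval d f' = T + (a + eval d f') := by ring
    rw [e1, e2]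
    exact this


set_option linter.unusedSectionVars false in
lemma struct_win (hg : g ∈ G') (s : ℕ) (M Db : ℤ) (hDbM : Db ≤ M) (χ : ℤ → κ)
    (a₀ : ℤ) (D : Fin s → ℤ) (c : Fin s → κ)
    (ha₀ : a₀ ∈ Set.Icc (1:ℤ) M)
    (hD : ∀ t : Fin s, 0 < D t ∧ D t ≤ Db ∧
      ∀ f ∈ G'.erase g, (a₀ + f.eval (D t) - g.eval (D t) ∈ Set.Icc (1:ℤ) M ∧
        χ (a₀ + f.eval (D t) - g.eval (D t)) = c t))
    (t : Fin s) (hct : c t = χ a₀) : WIN G' M χ := by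
  obtain ⟨hD0, hDb, hpts⟩ := hD t
  have key : ∀ f ∈ G', (a₀ - g.eval (D t)) + f.eval (D t) ∈ Set.Icc (1:ℤ) M ∧
      χ ((a₀ - g.eval (D t)) + f.eval (D t)) = c t := by
    intro f hf
    by_cases hfg : f = g
    · have e : (a₀ - g.eval (D t)) + f.eval (D t) = a₀ := by rw [hfg]; ring
      rw [e]
      exact ⟨ha₀, hct.symm⟩
    · have h1 := hpts f (Finset.mem_erase.2 ⟨hfg, hf⟩)
      have e : (a₀ - g.eval (D t)) + f.eval (D t) = a₀ + f.eval (D t) - g.eval (D t) := by ring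
      rw [e]
      exact h1
  refine ⟨a₀ - g.eval (D t), D t, hD0, le_trans hDb hDbM,
    fun f hf => (key f hf).1, fun f hf f' hf' => ?_⟩
  rw [(key f hf).2, (key f' hf').2]


set_option maxHeartbeats 2000000 in
lemma claim_step
    (hG' : ∀ f ∈ G', f.eval 0 = 0) (hg : g ∈ G')
    (IH : ∀ B Db : ℤ, 1 ≤ B → 1 ≤ Db → PVb (Hfam G' g B Db))
    (s : ℕ) (M Db : ℤ) (hM : 1 ≤ M) (hDb : 1 ≤ Db) (hDbM : Db ≤ M)
    (hcl : ∀ χ : ℤ → κ, WIN G' M χ ∨ STRUCT G' g s M Db χ) :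
    ∃ M' Db' : ℤ, 1 ≤ M' ∧ 1 ≤ Db' ∧ Db' ≤ M' ∧
      ∀ χ : ℤ → κ, WIN G' M' χ ∨ STRUCT G' g (s+1) M' Db' χ := by
  classical
  set B : ℤ := M with hBdef
  obtain ⟨Nb, hNb⟩ := IH B Db hM hDb (Fin B.toNat → κ)
  have hNb0 : (0:ℤ) ≤ (Nb:ℤ) := Int.ofNat_nonneg Nb
  obtain ⟨K, hK0, hKb⟩ := polyBound g (B * Nb) (by positivity)
  refine ⟨K + B*((Nb:ℤ)+1) + K, Db + B*(Nb:ℤ), by nlinarith, by nlinarith, by nlinarith, ?_⟩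
  intro χ
  set χb : ℤ → (Fin B.toNat → κ) := fun y u => χ (K + y*B + 1 + ((u : ℕ) : ℤ)) with hχb
  obtain ⟨ab, eb, heb0, hebN, hbpts, hbmono⟩ := hNb χb
  have h0mem : (0:ℤ[X]) ∈ Hfam G' g B Db := Finset.mem_insert_self _ _
  have hab : ab ∈ Set.Icc (1:ℤ) (Nb:ℤ) := by
    have := hbpts 0 h0mem
    simpa using this
  have rangelem : ∀ w x : ℤ, 1 ≤ ab + w → ab + w ≤ (Nb:ℤ) → 1 ≤ x → x ≤ B →
      (1 ≤ K + ab*B + x + B*w ∧ K + ab*B + x + B*w ≤ K + B*((Nb:ℤ)+1) + K) := by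
    intro w x h1 h2 h3 h4
    have e1 : (1:ℤ)*B ≤ (ab+w)*B := mul_le_mul_of_nonneg_right h1 (by linarith)
    have e2 : (ab+w)*B ≤ (Nb:ℤ)*B := mul_le_mul_of_nonneg_right h2 (by linarith)
    constructor <;> nlinarith [e1, e2]
  have habB1 : B ≤ ab*B := by
    have := mul_le_mul_of_nonneg_right hab.1 (show (0:ℤ) ≤ B by linarith)
    linarith
  have habBN : ab*B ≤ (Nb:ℤ)*B := by
    have := mul_le_mul_of_nonneg_right hab.2 (show (0:ℤ) ≤ B by linarith)
    linarith
  -- the key colour-transfer fact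
  have KEY : ∀ h ∈ Hfam G' g B Db, ∀ x : ℤ, 1 ≤ x → x ≤ B →
      χ (K + ab*B + x + B * h.eval eb) = χ (K + ab*B + x) := by
    intro h hh x hx1 hx2
    have hmono' := hbmono h hh 0 h0mem
    rw [eval_zero, add_zero] at hmono'
    have hxlt : (x - 1).toNat < B.toNat := by omega
    have hcf := congrFun hmono' ⟨(x-1).toNat, hxlt⟩
    simp only [hχb] at hcf
    have hcast : (((x-1).toNat : ℕ) : ℤ) = x - 1 := Int.toNat_of_nonneg (by omega)
    rw [hcast] at hcf
    have e1 : K + (ab + h.eval eb)*B + 1 + (x - 1) = K + ab*B + x + B*h.eval eb := by ring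
    have e2 : K + ab*B + 1 + (x-1) = K + ab*B + x := by ring
    rw [e1, e2] at hcf
    exact hcf
  have habB : (0:ℤ) ≤ K + ab*B := by nlinarith [hab.1]
  have hshiftbd : (K + ab*B) + M ≤ K + B*((Nb:ℤ)+1) + K := by nlinarith
  rcases hcl (fun z => χ ((K + ab*B) + z)) with hwin | hstruct
  · left
    refine win_shift G' M _ (K + ab*B) habB hshiftbd χ hwin
  · obtain ⟨a0'', D, c, hcinj, ha0'', hDs⟩ := hstruct
    set E : ℤ := B * eb with hEdef
    have hE1 : 1 ≤ E := by nlinarith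
    have hENb : E ≤ B * Nb := by
      have := mul_le_mul_of_nonneg_left hebN (show (0:ℤ) ≤ B by linarith)
      linarith
    have hgE : |g.eval E| ≤ K := hKb E (by rw [abs_of_nonneg (by nlinarith)]; exact hENb)
    by_cases hco : ∃ t, c t = χ ((K + ab*B) + a0'')
    · left
      obtain ⟨t, hct⟩ := hco
      refine win_shift G' M _ (K + ab*B) habB hshiftbd χ ?_
      exact struct_win G' g hg s M Db hDbM _ a0'' D c ha0'' hDs t hct
    · right
      push_neg at hco
      set a0 : ℤ := K + ab*B + a0'' with ha0def
      refine ⟨a0 + g.eval E, Fin.snoc (fun t => D t + E) E, Fin.snoc c (χ a0), ?_, ?_, ?_⟩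
      · -- injectivity of the snoc
        intro t1 t2 h12
        rcases Fin.eq_castSucc_or_eq_last t1 with ⟨u1, rfl⟩ | rfl <;>
          rcases Fin.eq_castSucc_or_eq_last t2 with ⟨u2, rfl⟩ | rfl
        · rw [Fin.snoc_castSucc, Fin.snoc_castSucc] at h12
          exact congrArg Fin.castSucc (hcinj h12)
        · rw [Fin.snoc_castSucc, Fin.snoc_last] at h12
          exact absurd h12 (hco u1)
        · rw [Fin.snoc_castSucc, Fin.snoc_last] at h12
          exact absurd h12.symm (hco u2)
        · rfl
      · -- new focus in range
        have h1 := ha0''.1; have h2 := ha0''.2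
        have hgE1 := abs_le.1 hgE
        constructor
        · simp only [ha0def]; linarith [hgE1.1, habB1]
        · simp only [ha0def]; linarith [hgE1.2, habBN]
      · intro t'
        refine Fin.lastCases ?_ ?_ t'
        · -- the new configuration
          rw [Fin.snoc_last, Fin.snoc_last]
          refine ⟨by nlinarith, by nlinarith, ?_⟩
          intro f hf
          have hfG : f ∈ G' := Finset.mem_of_mem_erase hf
          have hf0 : f.eval 0 = 0 := hG' f hfG
          have hsc : B * (sc B f).eval eb = f.eval E := sc_eval B f hf0 eb
          have hmemf : sc B f ∈ Hfam G' g B Db :=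
            Finset.mem_insert_of_mem (Finset.mem_union_left _ (Finset.mem_image_of_mem _ hf))
          have hrange := hbpts (sc B f) hmemf
          set w : ℤ := (sc B f).eval eb with hwdef
          have hPe : a0 + g.eval E + f.eval E - g.eval E = K + ab*B + a0'' + B * w := by
            rw [hwdef, hsc]; simp only [ha0def]; ring
          constructor
          · rw [hPe, Set.mem_Icc]
            have hr := Set.mem_Icc.1 hrange
            exact rangelem w a0'' (by linarith [hr.1]) (by linarith [hr.2]) ha0''.1 ha0''.2
          · rw [hPe]
            exact KEY (sc B f) hmemf a0'' ha0''.1 ha0''.2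
        · -- the old configurations, refocused
          intro t
          rw [Fin.snoc_castSucc, Fin.snoc_castSucc]
          obtain ⟨hD0, hDbt, hfpts⟩ := hDs t
          refine ⟨by nlinarith, by nlinarith, ?_⟩
          intro f hf
          have hfG : f ∈ G' := Finset.mem_of_mem_erase hf
          have hf0 : f.eval 0 = 0 := hG' f hfG
          set q : ℤ[X] := g + shift (D t) f - shift (D t) g with hqdef
          have hq0 : q.eval 0 = 0 := by
            simp [hqdef, eval_add, eval_sub, shift_eval_zero, hG' g hg]
          have hmemq : sc B q ∈ Hfam G' g B Db := by
            refine Finset.mem_insert_of_mem (Finset.mem_union_right _ ?_)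
            refine Finset.mem_image.2 ⟨(D t, f), ?_, rfl⟩
            exact Finset.mem_product.2 ⟨Finset.mem_Icc.2 ⟨hD0, hDbt⟩, hf⟩
          have hqe : B * (sc B q).eval eb = q.eval E := sc_eval B q hq0 eb
          have hqeval : q.eval E = g.eval E + (f.eval (D t + E) - f.eval (D t))
              - (g.eval (D t + E) - g.eval (D t)) := by
            simp only [hqdef, eval_add, eval_sub, shift_eval]
            rw [add_comm E (D t)]
          set w : ℤ := (sc B q).eval eb with hwdef
          set x'' : ℤ := a0'' + f.eval (D t) - g.eval (D t) with hxdef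
          have hold := hfpts f hf
          have holdr : x'' ∈ Set.Icc (1:ℤ) M := hold.1
          have hPe : a0 + g.eval E + f.eval (D t + E) - g.eval (D t + E)
              = K + ab*B + x'' + B * w := by
            rw [hwdef, hqe, hqeval]
            simp only [ha0def, hxdef]; ring
          have hrange := hbpts (sc B q) hmemq
          have holdr' := Set.mem_Icc.1 holdr
          constructor
          · rw [hPe, Set.mem_Icc]
            have hr := Set.mem_Icc.1 hrange
            exact rangelem w x'' (by linarith [hr.1]) (by linarith [hr.2]) holdr'.1 holdr'.2
          · rw [hPe]
            have := KEY (sc B q) hmemq x'' holdr'.1 holdr'.2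
            rw [this]
            simpa using hold.2

end Step

section StepTwo
variable (G' : Finset ℤ[X]) (g : ℤ[X]) 

set_option maxHeartbeats 1000000 in
lemma step (hG' : ∀ f ∈ G', f.eval 0 = 0) (hg : g ∈ G')
    (IH : ∀ B Db : ℤ, 1 ≤ B → 1 ≤ Db → PVb (Hfam G' g B Db)) : PVb G' := by
  intro κ instκ
  have claims : ∀ s : ℕ, ∃ M Db : ℤ, 1 ≤ M ∧ 1 ≤ Db ∧ Db ≤ M ∧
      ∀ χ : ℤ → κ, WIN G' M χ ∨ STRUCT G' g s M Db χ := by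
    intro s
    induction s with
    | zero =>
      refine ⟨1, 1, le_refl _, le_refl _, le_refl _, fun χ => Or.inr ?_⟩
      exact ⟨1, fun t => t.elim0, fun t => t.elim0, fun a => a.elim0,
        by simp, fun t => t.elim0⟩
    | succ s ihs =>
      obtain ⟨M, Db, h1, h2, h3, h4⟩ := ihs
      exact claim_step G' g hG' hg IH s M Db h1 h2 h3 h4
  obtain ⟨M, Db, hM, hDb, hDbM, hcl⟩ := claims (Fintype.card κ)
  refine ⟨M.toNat, fun χ => ?_⟩
  have hMt : ((M.toNat : ℕ) : ℤ) = M := Int.toNat_of_nonneg (by linarith)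
  have final : WIN G' M χ := by
    rcases hcl χ with hwin | hstruct
    · exact hwin
    · obtain ⟨a0, D, c, hcinj, ha0, hD⟩ := hstruct
      have hsurj : Function.Surjective c := by
        have hbij := (Fintype.bijective_iff_injective_and_card c).2 ⟨hcinj, by simp⟩
        exact hbij.surjective
      obtain ⟨t, hct⟩ := hsurj (χ a0)
      exact struct_win G' g hg _ M Db hDbM χ a0 D c ha0 hD t hct
  obtain ⟨a, d, h0, hdM, hpts, hmono⟩ := final
  exact ⟨a, d, h0, by rw [hMt]; exact hdM, by rw [hMt]; exact hpts, hmono⟩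

end StepTwo
lemma sc_zero (B : ℤ) : sc B 0 = 0 := by simp [sc]

/-- class pairs: (degree, leading coefficient) of the nonzero members -/
noncomputable def cp (G : Finset ℤ[X]) : Finset (ℕ × ℤ) :=
  (G.erase 0).image fun f => (f.natDegree, f.leadingCoeff)

noncomputable def mu (G : Finset ℤ[X]) : Multiset ℕ := (cp G).val.map Prod.fst

lemma vanish_deg_pos {p : ℤ[X]} (hp : p.eval 0 = 0) (hp0 : p ≠ 0) : p.natDegree ≠ 0 := by
  intro h
  have := eq_C_of_natDegree_eq_zero h
  rw [coeff_zero_eq_eval_zero, hp] at this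
  simp at this
  exact hp0 this

lemma sub_p_pair (p f : ℤ[X]) (hf0 : f ≠ 0) (hfe : p.natDegree ≤ f.natDegree)
    (hne : (f.natDegree, f.leadingCoeff) ≠ (p.natDegree, p.leadingCoeff)) :
    (f - p).natDegree = f.natDegree ∧
    (f - p).leadingCoeff
      = f.leadingCoeff - (if f.natDegree = p.natDegree then p.leadingCoeff else 0) := by
  set d := f.natDegree with hd
  have htop : (f - p).coeff d = f.leadingCoeff - (if d = p.natDegree then p.leadingCoeff else 0) := by
    rw [coeff_sub]
    congr 1
    split_ifs with h
    · rw [h, coeff_natDegree]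
    · rw [coeff_eq_zero_of_natDegree_lt (lt_of_le_of_ne hfe (fun hc => h hc.symm))]
  have htopne : (f - p).coeff d ≠ 0 := by
    rw [htop]
    split_ifs with h
    · refine sub_ne_zero.2 ?_
      intro hc
      exact hne (by rw [Prod.ext_iff]; exact ⟨h, hc⟩)
    · rw [sub_zero]
      exact leadingCoeff_ne_zero.2 hf0
  have habove : ∀ N, d < N → (f - p).coeff N = 0 := by
    intro N hN
    rw [coeff_sub, coeff_eq_zero_of_natDegree_lt hN,
      coeff_eq_zero_of_natDegree_lt (lt_of_le_of_lt hfe hN), sub_zero]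
  have hnd : (f - p).natDegree = d :=
    le_antisymm (natDegree_le_iff_coeff_eq_zero.2 habove) (le_natDegree_of_ne_zero htopne)
  refine ⟨hnd, ?_⟩
  rw [leadingCoeff, hnd, htop]

lemma sub_p_small (p f : ℤ[X]) (hp0 : p ≠ 0) (hf0 : f ≠ 0) (hp1 : p.natDegree ≠ 0)
    (hd : f.natDegree = p.natDegree) (hlc : f.leadingCoeff = p.leadingCoeff) :
    (f - p).natDegree < p.natDegree := by
  by_cases h : f - p = 0
  · rw [h, natDegree_zero]
    exact Nat.pos_of_ne_zero hp1
  · have hdeg : (f - p).degree < f.degree := by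
      apply degree_sub_lt _ hf0 hlc
      rw [degree_eq_natDegree hf0, degree_eq_natDegree hp0, hd]
    rw [degree_eq_natDegree hf0, hd] at hdeg
    exact (natDegree_lt_iff_degree_lt h).2 hdeg

lemma q_pair_big (g f' : ℤ[X]) (D : ℤ) (hg1 : g.natDegree ≠ 0)
    (hge : g.natDegree ≤ f'.natDegree) (hf'0 : f' ≠ 0) :
    (g + shift D f' - shift D g).natDegree = f'.natDegree ∧
    (g + shift D f' - shift D g).leadingCoeff = f'.leadingCoeff := by
  have hg0 : g ≠ 0 := fun h => hg1 (by rw [h, natDegree_zero])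
  have hf'1 : f'.natDegree ≠ 0 := fun h => hg1 (Nat.le_zero.1 (h ▸ hge))
  have hA0 : shift D f' ≠ 0 := shift_ne_zero D f' hf'1
  have hq : g + shift D f' - shift D g = (g - shift D g) + shift D f' := by ring
  have hlt : (g - shift D g).degree < (shift D f').degree := by
    refine lt_of_lt_of_le (degree_sub_shift_lt D g hg1) ?_
    rw [degree_eq_natDegree hg0, degree_eq_natDegree hA0, shift_natDegree]
    exact_mod_cast hge
  constructor
  · rw [hq]
    have := degree_add_eq_right_of_degree_lt hlt
    rw [natDegree_eq_of_degree_eq this, shift_natDegree]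
  · rw [hq, leadingCoeff_add_of_degree_lt hlt, shift_leadingCoeff D f' hf'1]

lemma q_small (g f' : ℤ[X]) (D : ℤ) (hg1 : g.natDegree ≠ 0)
    (hlt : f'.natDegree < g.natDegree) :
    (g + shift D f' - shift D g).natDegree < g.natDegree := by
  have hq : g + shift D f' - shift D g = (g - shift D g) + shift D f' := by ring
  rw [hq]
  refine lt_of_le_of_lt (natDegree_add_le _ _) ?_
  rw [sup_lt_iff]
  exact ⟨natDegree_sub_shift_lt D g hg1, by rw [shift_natDegree]; exact hlt⟩


section Measure

variable (G : Finset ℤ[X]) (p : ℤ[X]) (B Db : ℤ)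

set_option maxHeartbeats 1600000 in
lemma mu_Hfam_lt (hG : ∀ f ∈ G, f.eval 0 = 0)
    (hp : p ∈ G) (hp0 : p ≠ 0)
    (hmin : ∀ f ∈ G, f ≠ 0 → p.natDegree ≤ f.natDegree)
    (hB : 1 ≤ B) :
    DMlt (mu (Hfam ((insert 0 G).image (fun f => f - p)) (-p) B Db)) (mu G) := by
  classical
  set G' : Finset ℤ[X] := (insert 0 G).image (fun f => f - p) with hG'def
  set g : ℤ[X] := -p with hgdef
  set e : ℕ := p.natDegree with hedef
  set lp : ℤ := p.leadingCoeff with hlpdef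
  set H : Finset ℤ[X] := Hfam G' g B Db with hHdef
  have hp1 : p.natDegree ≠ 0 := vanish_deg_pos (hG p hp) hp0
  have hB0 : B ≠ 0 := by omega
  have hg1 : g.natDegree ≠ 0 := by rw [hgdef, natDegree_neg]; exact hp1
  have hgnd : g.natDegree = e := by rw [hgdef, natDegree_neg]
  -- membership characterisation
  have hmem_iff : ∀ f', f' ∈ G'.erase g ↔ ∃ f, f ∈ G ∧ f ≠ 0 ∧ f' = f - p := by
    intro f'
    constructor
    · intro hf'
      obtain ⟨hne, hmem⟩ := Finset.mem_erase.1 hf'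
      obtain ⟨f, hf, hfe⟩ := Finset.mem_image.1 hmem
      rcases Finset.mem_insert.1 hf with h0 | hfG
      · exfalso; apply hne; rw [← hfe, h0, hgdef]; ring
      · refine ⟨f, hfG, ?_, hfe.symm⟩
        intro h0
        apply hne
        rw [← hfe, h0, hgdef]; ring
    · rintro ⟨f, hfG, hf0, rfl⟩
      refine Finset.mem_erase.2 ⟨?_, Finset.mem_image.2 ⟨f, Finset.mem_insert_of_mem hfG, rfl⟩⟩
      intro hc
      apply hf0
      rw [hgdef] at hc
      have : f - p + p = -p + p := by rw [hc]
      simpa using this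
  -- the map on class pairs
  set ψ : ℕ × ℤ → ℕ × ℤ :=
    fun c => (c.1, (c.2 - if c.1 = e then lp else 0) * B ^ (c.1 - 1)) with hψdef
  have hψinj : Set.InjOn ψ ↑((cp G).erase (e, lp)) := by
    intro a _ b _ hab
    simp only [hψdef, Prod.ext_iff] at hab
    obtain ⟨h1, h2⟩ := hab
    refine Prod.ext h1 ?_
    rw [h1] at h2
    have := mul_right_cancel₀ (pow_ne_zero (b.1 - 1) hB0) h2
    omega
  -- the pair classification of the high part of `cp H`
  have keyHigh : (cp H).filter (fun c => e ≤ c.1) = ((cp G).erase (e, lp)).image ψ := by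
    ext c
    simp only [Finset.mem_filter, Finset.mem_image]
    constructor
    · rintro ⟨hcH, hce⟩
      obtain ⟨h₀, hh₀, hch⟩ := Finset.mem_image.1 hcH
      obtain ⟨hh0ne, hh0⟩ := Finset.mem_erase.1 hh₀
      rw [hHdef, Hfam] at hh0
      rcases Finset.mem_insert.1 hh0 with h | h
      · exact absurd h hh0ne
      rcases Finset.mem_union.1 h with h | h
      · -- a û piece
        obtain ⟨f', hf', hf'e⟩ := Finset.mem_image.1 h
        subst hf'e
        obtain ⟨f, hfG, hf0, rfl⟩ := (hmem_iff f').1 hf'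
        have hfp_ne : f - p ≠ 0 := by
          intro hc
          rw [hc, sc_zero] at hh0ne
          exact hh0ne rfl
        have hnd : (sc B (f - p)).natDegree = (f - p).natDegree :=
          sc_natDegree B _ hB0 hfp_ne
        have hce2 : e ≤ (f - p).natDegree := by
          have hc1 : c.1 = (sc B (f - p)).natDegree := by rw [← hch]
          rw [hc1, hnd] at hce
          exact hce
        have hfpne_pair : (f.natDegree, f.leadingCoeff) ≠ (e, lp) := by
          intro hc
          rw [Prod.mk.injEq] at hc
          have := sub_p_small p f hp0 hf0 hp1 hc.1 hc.2
          omega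
        have hpair := sub_p_pair p f hf0 (hmin f hfG hf0) hfpne_pair
        refine ⟨(f.natDegree, f.leadingCoeff), ?_, ?_⟩
        · exact Finset.mem_erase.2 ⟨hfpne_pair,
            Finset.mem_image.2 ⟨f, Finset.mem_erase.2 ⟨hf0, hfG⟩, rfl⟩⟩
        · rw [← hch]
          simp only [hψdef]
          have h2 := sc_leadingCoeff B (f - p) hB0 hfp_ne
          rw [hnd, h2, hpair.1, hpair.2]
      · -- an m̂ piece
        obtain ⟨x, hx, hxe⟩ := Finset.mem_image.1 h
        subst hxe
        obtain ⟨hxD, hxf⟩ := Finset.mem_product.1 hx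
        obtain ⟨f, hfG, hf0, hf'eq⟩ := (hmem_iff x.2).1 hxf
        have hqne : g + shift x.1 x.2 - shift x.1 g ≠ 0 := by
          intro hc
          rw [hc, sc_zero] at hh0ne
          exact hh0ne rfl
        have hndq : (sc B (g + shift x.1 x.2 - shift x.1 g)).natDegree
            = (g + shift x.1 x.2 - shift x.1 g).natDegree := sc_natDegree B _ hB0 hqne
        have hce' : e ≤ (g + shift x.1 x.2 - shift x.1 g).natDegree := by
          have hc1 : c.1 = (sc B (g + shift x.1 x.2 - shift x.1 g)).natDegree := by rw [← hch]
          rw [hc1, hndq] at hce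
          exact hce
        have hf'big : e ≤ x.2.natDegree := by
          by_contra hlow
          push_neg at hlow
          have := q_small g x.2 x.1 hg1 (by rw [hgnd]; exact hlow)
          rw [hgnd] at this
          omega
        have hf'ne : x.2 ≠ 0 := by
          intro hc
          rw [hc, natDegree_zero] at hf'big
          have : e ≠ 0 := by rw [hedef]; exact hp1
          omega
        have hqpair := q_pair_big g x.2 x.1 hg1 (by rw [hgnd]; exact hf'big) hf'ne
        have hfpne_pair : (f.natDegree, f.leadingCoeff) ≠ (e, lp) := by
          intro hc
          rw [Prod.mk.injEq] at hc
          have hsm := sub_p_small p f hp0 hf0 hp1 hc.1 hc.2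
          rw [← hf'eq] at hsm
          omega
        have hpair := sub_p_pair p f hf0 (hmin f hfG hf0) hfpne_pair
        refine ⟨(f.natDegree, f.leadingCoeff), ?_, ?_⟩
        · exact Finset.mem_erase.2 ⟨hfpne_pair,
            Finset.mem_image.2 ⟨f, Finset.mem_erase.2 ⟨hf0, hfG⟩, rfl⟩⟩
        · rw [← hch]
          simp only [hψdef]
          have h2 := sc_leadingCoeff B _ hB0 hqne
          rw [hndq, h2, hqpair.1, hqpair.2, hf'eq, hpair.1, hpair.2]
    · rintro ⟨⟨d, cc⟩, hdcc, rfl⟩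
      obtain ⟨hnepair, hdccG⟩ := Finset.mem_erase.1 hdcc
      obtain ⟨f, hfmem, hfpair⟩ := Finset.mem_image.1 hdccG
      obtain ⟨hf0, hfG⟩ := Finset.mem_erase.1 hfmem
      rw [Prod.mk.injEq] at hfpair
      obtain ⟨hfd, hflc⟩ := hfpair
      have hfpne_pair : (f.natDegree, f.leadingCoeff) ≠ (e, lp) := by
        rw [hfd, hflc]
        exact hnepair
      have hfp_ne : f - p ≠ 0 := by
        intro hc
        apply hfpne_pair
        rw [sub_eq_zero.1 hc]
      have hpair := sub_p_pair p f hf0 (hmin f hfG hf0) hfpne_pair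
      have hf'mem : f - p ∈ G'.erase g := (hmem_iff (f - p)).2 ⟨f, hfG, hf0, rfl⟩
      have hscmem : sc B (f - p) ∈ H := by
        rw [hHdef, Hfam]
        exact Finset.mem_insert_of_mem (Finset.mem_union_left _
          (Finset.mem_image_of_mem _ hf'mem))
      have hscne : sc B (f - p) ≠ 0 := sc_ne_zero B _ hB0 hfp_ne
      constructor
      · refine Finset.mem_image.2 ⟨sc B (f - p), Finset.mem_erase.2 ⟨hscne, hscmem⟩, ?_⟩
        have h1 := sc_natDegree B (f - p) hB0 hfp_ne
        have h2 := sc_leadingCoeff B (f - p) hB0 hfp_ne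
        simp only [hψdef]
        rw [h1, h2, hpair.1, hpair.2, hfd, hflc]
      · simp only [hψdef]
        have : e ≤ f.natDegree := hmin f hfG hf0
        omega
  -- now assemble the multiset inequality
  have hpairG : (e, lp) ∈ cp G :=
    Finset.mem_image.2 ⟨p, Finset.mem_erase.2 ⟨hp0, hp⟩, rfl⟩
  refine ⟨e, ((cp H).val.filter (fun c => ¬ e ≤ c.1)).map Prod.fst, ?_, ?_, ?_⟩
  · exact Multiset.mem_map.2 ⟨(e, lp), hpairG, rfl⟩
  · have hsplit : mu H
        = ((cp H).val.filter (fun c => e ≤ c.1)).map Prod.fst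
          + ((cp H).val.filter (fun c => ¬ e ≤ c.1)).map Prod.fst := by
      rw [mu, ← Multiset.map_add, Multiset.filter_add_not]
    rw [hsplit]
    congr 1
    have h1 : ((cp H).val.filter (fun c => e ≤ c.1))
        = ((cp H).filter (fun c => e ≤ c.1)).val := by
      rw [Finset.filter_val]
    have hcons : (cp G).val = (e, lp) ::ₘ (cp G).val.erase (e, lp) :=
      (Multiset.cons_erase hpairG).symm
    have hR : (mu G).erase e = Multiset.map Prod.fst ((cp G).val.erase (e, lp)) := by
      conv_lhs => rw [mu, hcons]
      rw [Multiset.map_cons, Multiset.erase_cons_head]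
    rw [h1, keyHigh, Finset.image_val_of_injOn hψinj, Finset.erase_val, hR,
      Multiset.map_map]
    apply Multiset.map_congr rfl
    intro z _
    simp [hψdef]
  · intro y hy
    obtain ⟨c, hc, rfl⟩ := Multiset.mem_map.1 hy
    have := (Multiset.mem_filter.1 hc).2
    omega

end Measure
lemma pvb_subset {G G₂ : Finset ℤ[X]} (h : G ⊆ G₂) (h2 : PVb G₂) : PVb G := by
  intro κ _
  obtain ⟨N, hN⟩ := h2 κ
  refine ⟨N, fun χ => ?_⟩
  obtain ⟨a, d, h1, h2, h3, h4⟩ := hN χ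
  exact ⟨a, d, h1, h2, fun f hf => h3 f (h hf), fun f hf f' hf' => h4 f (h hf) f' (h hf')⟩

theorem pvdw (G : Finset ℤ[X]) (hG : ∀ f ∈ G, f.eval 0 = 0) : PVb G := by
  classical
  have main : ∀ (Mu : Multiset ℕ) (G : Finset ℤ[X]), mu G = Mu →
      (∀ f ∈ G, f.eval 0 = 0) → PVb G := by
    intro Mu
    induction Mu using dm_wf.induction with
    | _ Mu IH =>
      intro G hMu hGv
      by_cases hGz : G.erase 0 = ∅
      · intro κ _
        refine ⟨1, fun χ => ⟨1, 1, one_pos, by norm_num, fun f hf => ?_, fun f hf f' hf' => ?_⟩⟩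
        · have hf0 : f = 0 := by
            by_contra hne
            have : f ∈ G.erase 0 := Finset.mem_erase.2 ⟨hne, hf⟩
            rw [hGz] at this
            exact absurd this (Finset.notMem_empty f)
          simp [hf0]
        · have hf0 : f = 0 := by
            by_contra hne
            have : f ∈ G.erase 0 := Finset.mem_erase.2 ⟨hne, hf⟩
            rw [hGz] at this; exact absurd this (Finset.notMem_empty f)
          have hf0' : f' = 0 := by
            by_contra hne
            have : f' ∈ G.erase 0 := Finset.mem_erase.2 ⟨hne, hf'⟩
            rw [hGz] at this; exact absurd this (Finset.notMem_empty f')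
          rw [hf0, hf0']
      · obtain ⟨p, hpmem, hpmin⟩ := Finset.exists_min_image (G.erase 0)
          (fun f => f.natDegree) (Finset.nonempty_of_ne_empty hGz)
        obtain ⟨hp0, hpG⟩ := Finset.mem_erase.1 hpmem
        have hmin : ∀ f ∈ G, f ≠ 0 → p.natDegree ≤ f.natDegree := by
          intro f hf hf0
          exact hpmin f (Finset.mem_erase.2 ⟨hf0, hf⟩)
        set G' : Finset ℤ[X] := (insert 0 G).image (fun f => f - p) with hG'def
        set g : ℤ[X] := -p with hgdef
        have hG'v : ∀ f' ∈ G', f'.eval 0 = 0 := by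
          intro f' hf'
          obtain ⟨f, hf, rfl⟩ := Finset.mem_image.1 hf'
          rcases Finset.mem_insert.1 hf with h | h
          · rw [h, eval_sub, hGv p hpG]; simp
          · rw [eval_sub, hGv p hpG, hGv f h]; simp
        have hgG' : g ∈ G' := by
          refine Finset.mem_image.2 ⟨0, Finset.mem_insert_self _ _, ?_⟩
          rw [hgdef]; ring
        have hpvbG' : PVb G' := by
          refine step G' g hG'v hgG' ?_
          intro B Db hB hDb
          have hlt : DMlt (mu (Hfam G' g B Db)) Mu := by
            rw [← hMu, hG'def, hgdef]
            exact mu_Hfam_lt G p B Db hGv hpG hp0 hmin hB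
          have hHv : ∀ h ∈ Hfam G' g B Db, h.eval 0 = 0 := by
            intro h hh
            rw [Hfam] at hh
            rcases Finset.mem_insert.1 hh with h1 | h1
            · rw [h1]; simp
            rcases Finset.mem_union.1 h1 with h2 | h2
            · obtain ⟨f', hf', rfl⟩ := Finset.mem_image.1 h2
              exact sc_eval_zero B f' (hG'v f' (Finset.mem_of_mem_erase hf'))
            · obtain ⟨x, hx, rfl⟩ := Finset.mem_image.1 h2
              refine sc_eval_zero B _ ?_
              rw [eval_sub, eval_add, shift_eval_zero, shift_eval_zero]
              have : g.eval 0 = 0 := by rw [hgdef]; simp [hGv p hpG]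
              rw [this]; ring
          exact IH (mu (Hfam G' g B Db)) hlt (Hfam G' g B Db) rfl hHv
        -- transfer back to G
        have hpvbG0 : PVb (insert 0 G) := by
          intro κ _
          obtain ⟨N, hN⟩ := hpvbG' κ
          refine ⟨N, fun χ => ?_⟩
          obtain ⟨a, d, h1, h2, h3, h4⟩ := hN χ
          refine ⟨a - p.eval d, d, h1, h2, fun f hf => ?_, fun f hf f' hf' => ?_⟩
          · have := h3 (f - p) (Finset.mem_image_of_mem _ hf)
            rw [eval_sub] at this
            have e : a - p.eval d + f.eval d = a + (f.eval d - p.eval d) := by ring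
            rw [e]; exact this
          · have := h4 (f - p) (Finset.mem_image_of_mem _ hf)
              (f' - p) (Finset.mem_image_of_mem _ hf')
            rw [eval_sub, eval_sub] at this
            have e : a - p.eval d + f.eval d = a + (f.eval d - p.eval d) := by ring
            have e' : a - p.eval d + f'.eval d = a + (f'.eval d - p.eval d) := by ring
            rw [e, e']; exact this
        exact pvb_subset (Finset.subset_insert 0 G) hpvbG0
  exact main (mu G) G rfl hG


end PVDW


/-- **Base case of the outer induction in Theorem 4.2** (`ℬ = {a₁ x}`).
Let `h, m, n, k ∈ ℕ`, `𝒜 = {p 1, ..., p k}` a set of integral polynomials and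
`a₁` a nonzero integer.  Then there exists `N` such that for every
`(m, n)`-type colouring `Δ` of `{1, ..., N}` one of the following holds:
(i) there exist `a ∈ ℤ` and `d ≠ 0` with
`{a, a + p 1 d, ..., a + p k d} ⊆ {1, ..., N}` monochromatic (some coordinate
`j ∈ {1, ..., m}` of `Δ` is constant on the set); or
(ii) there exist `a' ∈ ℤ` and `d' > h` with `{a', a' + a₁ * d'} ⊆ {1, ..., N}`
fully-rainbow (the two elements are distinct, all their first-`m` coordinate
colours are pairwise different, and the last coordinate `Δ_{m+1}` agrees on
both). -/
theorem base_case_outer_induction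
    (h m n : ℕ) {k : ℕ}
    (p : Fin k → Polynomial ℤ) (hp0 : ∀ i, (p i).eval 0 = 0)
    (a₁ : ℤ) (ha₁ : a₁ ≠ 0) :
    ∃ N : ℕ, ∀ Δ : ℤ → (Fin m → ℕ) × Fin n,
      (∃ a d : ℤ, d ≠ 0 ∧
        a ∈ Set.Icc (1 : ℤ) (N : ℤ) ∧
        (∀ i : Fin k, a + (p i).eval d ∈ Set.Icc (1 : ℤ) (N : ℤ)) ∧
        (∃ j : Fin m, ∀ i : Fin k, (Δ (a + (p i).eval d)).1 j = (Δ a).1 j)) ∨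
      (∃ a' d' : ℤ, (h : ℤ) < d' ∧
        a' ∈ Set.Icc (1 : ℤ) (N : ℤ) ∧
        a' + a₁ * d' ∈ Set.Icc (1 : ℤ) (N : ℤ) ∧
        a' + a₁ * d' ≠ a' ∧
        (∀ j j' : Fin m, (Δ (a' + a₁ * d')).1 j ≠ (Δ a').1 j') ∧
        (Δ (a' + a₁ * d')).2 = (Δ a').2) := by
  classical
  open PVDW Polynomial in
  -- trivial case: no colours at all
  rcases n with _ | n'
  · exact ⟨1, fun Δ => ((Δ 0).2).elim0⟩
  rcases m with _ | m'
  · -- no ℕ-valued coordinates: produce a rainbow pair by pigeonhole on the last coordinate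
    set Q : ℤ := (a₁.natAbs : ℤ) * ((h:ℤ) + 1) with hQ
    have hQ1 : 1 ≤ Q := by
      have : 1 ≤ (a₁.natAbs : ℤ) := by
        have := Int.natAbs_pos.2 ha₁
        omega
      nlinarith
    refine ⟨(1 + (n'+1) * (a₁.natAbs * (h+1)) : ℕ), fun Δ => Or.inr ?_⟩
    set χ₂ : ℤ → Fin (n'+1) := fun x => (Δ x).2 with hχ₂
    set y : ℕ → ℤ := fun j => 1 + (j:ℤ) * Q with hy
    have hpigeon : ∃ u v : ℕ, u < v ∧ v ≤ n'+1 ∧ χ₂ (y u) = χ₂ (y v) := by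
      obtain ⟨j₁, j₂, hne, heq⟩ := Fintype.exists_ne_map_eq_of_card_lt
        (fun j : Fin (n'+2) => χ₂ (y (j:ℕ))) (by rw [Fintype.card_fin, Fintype.card_fin]; omega)
      rcases lt_or_gt_of_ne (fun hc : (j₁:ℕ) = (j₂:ℕ) => hne (Fin.ext hc)) with hlt | hgt
      · exact ⟨j₁, j₂, hlt, by omega, heq⟩
      · exact ⟨j₂, j₁, hgt, by omega, heq.symm⟩
    obtain ⟨u, v, huv, hv, hcol⟩ := hpigeon
    have hyIcc : ∀ j : ℕ, j ≤ n'+1 → y j ∈ Set.Icc (1:ℤ) ((1 + (n'+1) * (a₁.natAbs * (h+1)) : ℕ) : ℤ) := by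
      intro j hj
      have hQabs : ((1 + (n'+1) * (a₁.natAbs * (h+1)) : ℕ) : ℤ) = 1 + ((n':ℤ)+1) * Q := by
        rw [hQ]; push_cast; ring
      simp only [hy, Set.mem_Icc, hQabs]
      have h1 : (j:ℤ) ≤ (n':ℤ)+1 := by exact_mod_cast hj
      have h2 : (0:ℤ) ≤ (j:ℤ) := Int.ofNat_nonneg j
      have h3 : (j:ℤ) * Q ≤ ((n':ℤ)+1) * Q := mul_le_mul_of_nonneg_right h1 (by linarith)
      have h4 : (0:ℤ) ≤ (j:ℤ) * Q := mul_nonneg h2 (by linarith)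
      constructor <;> linarith
    set d' : ℤ := ((h:ℤ)+1) * ((v:ℤ) - (u:ℤ)) with hd'
    have hwpos : (1:ℤ) ≤ (v:ℤ) - (u:ℤ) := by
      have : (u:ℤ) < (v:ℤ) := by exact_mod_cast huv
      omega
    have hd'h : (h:ℤ) < d' := by nlinarith
    have hd'pos : 0 < d' := by nlinarith
    have habs : (a₁.natAbs : ℤ) = |a₁| := (Int.abs_eq_natAbs a₁).symm
    rcases lt_or_gt_of_ne ha₁ with hneg | hpos
    · -- a₁ < 0 : use the larger point as the base
      refine ⟨y v, d', hd'h, hyIcc v hv, ?_, ?_, ?_, ?_⟩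
      · have e : y v + a₁ * d' = y u := by
          simp only [hy, hQ, habs]
          rw [abs_of_neg hneg]
          ring
        rw [e]; exact hyIcc u (by omega)
      · have hne : a₁ * d' ≠ 0 := mul_ne_zero ha₁ (ne_of_gt hd'pos)
        intro hc
        apply hne
        linarith
      · intro j; exact j.elim0
      · have e : y v + a₁ * d' = y u := by
          simp only [hy, hQ, habs]
          rw [abs_of_neg hneg]
          ring
        rw [e]; exact hcol
    · refine ⟨y u, d', hd'h, hyIcc u (by omega), ?_, ?_, ?_, ?_⟩
      · have e : y u + a₁ * d' = y v := by
          simp only [hy, hQ, habs]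
          rw [abs_of_pos hpos]
          ring
        rw [e]; exact hyIcc v hv
      · have hne : a₁ * d' ≠ 0 := mul_ne_zero ha₁ (ne_of_gt hd'pos)
        intro hc
        apply hne
        linarith
      · intro j; exact j.elim0
      · have e : y u + a₁ * d' = y v := by
          simp only [hy, hQ, habs]
          rw [abs_of_pos hpos]
          ring
        rw [e]; exact hcol.symm
  · -- main case : m = m'+1, n = n'+1
    set M₀ : ℤ := a₁ * ((h:ℤ)+1) with hM₀
    have hM₀0 : M₀ ≠ 0 := mul_ne_zero ha₁ (by omega)
    set u : Fin k → ℤ[X] := fun i => (p i).comp (C M₀ * X) with hu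
    have hueval : ∀ i x, (u i).eval x = (p i).eval (M₀ * x) := by
      intro i x
      simp [hu, eval_comp]
    set G : Finset ℤ[X] := insert 0 (Finset.image u Finset.univ) with hG
    have hGv : ∀ f ∈ G, f.eval 0 = 0 := by
      intro f hf
      rcases Finset.mem_insert.1 hf with h1 | h1
      · rw [h1]; simp
      · obtain ⟨i, _, rfl⟩ := Finset.mem_image.1 h1
        rw [hueval i 0, mul_zero, hp0 i]
    obtain ⟨N, hN⟩ := pvdw G hGv (Fin (n'+1) × (Fin (m'+1) × Fin (m'+1)))
    refine ⟨N, fun Δ => ?_⟩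
    by_cases hii : (∃ a' d' : ℤ, (h : ℤ) < d' ∧
        a' ∈ Set.Icc (1 : ℤ) (N : ℤ) ∧
        a' + a₁ * d' ∈ Set.Icc (1 : ℤ) (N : ℤ) ∧
        a' + a₁ * d' ≠ a' ∧
        (∀ j j' : Fin (m'+1), (Δ (a' + a₁ * d')).1 j ≠ (Δ a').1 j') ∧
        (Δ (a' + a₁ * d')).2 = (Δ a').2)
    · exact Or.inr hii
    left
    -- colouring pieces
    set χ₂ : ℤ → Fin (n'+1) := fun x => (Δ x).2 with hχ₂
    set refS : ℤ → Finset ℤ := fun x =>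
      (Finset.Icc (1:ℤ) (N:ℤ)).filter (fun z => χ₂ z = χ₂ x ∧ M₀ ∣ (z - x)) with hrefS
    set ref : ℤ → ℤ := fun x => (insert x (refS x)).min' (Finset.insert_nonempty _ _) with href
    set prof : ℤ → Fin (m'+1) × Fin (m'+1) := fun x =>
      if hx : ∃ jj : Fin (m'+1) × Fin (m'+1), (Δ x).1 jj.1 = (Δ (ref x)).1 jj.2
      then hx.choose else (0, 0) with hprof
    set χ : ℤ → Fin (n'+1) × (Fin (m'+1) × Fin (m'+1)) := fun x => (χ₂ x, prof x) with hχ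
    obtain ⟨a, e, he0, heN, hpts, hmono⟩ := hN χ
    set d : ℤ := M₀ * e with hd
    have hd0 : d ≠ 0 := mul_ne_zero hM₀0 (by omega)
    have h0G : (0:ℤ[X]) ∈ G := Finset.mem_insert_self _ _
    have huG : ∀ i, u i ∈ G := fun i =>
      Finset.mem_insert_of_mem (Finset.mem_image_of_mem u (Finset.mem_univ i))
    have haIcc : a ∈ Set.Icc (1:ℤ) (N:ℤ) := by
      have := hpts 0 h0G
      simpa using this
    have hptsi : ∀ i, a + (p i).eval d ∈ Set.Icc (1:ℤ) (N:ℤ) := by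
      intro i
      have := hpts (u i) (huG i)
      rw [hueval i e, ← hd] at this
      exact this
    have hmono' : ∀ i, χ (a + (p i).eval d) = χ a := by
      intro i
      have := hmono (u i) (huG i) 0 h0G
      rw [hueval i e, ← hd] at this
      simpa using this
    have hdvd : ∀ i, M₀ ∣ (p i).eval d := by
      intro i
      have h1 : d - 0 ∣ (p i).eval d - (p i).eval 0 := sub_dvd_eval_sub d 0 (p i)
      rw [hp0 i, sub_zero, sub_zero] at h1
      exact dvd_trans (Dvd.intro e rfl) h1
    have min'_congr : ∀ (s t : Finset ℤ) (hs : s.Nonempty) (ht : t.Nonempty), s = t →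
        s.min' hs = t.min' ht := by
      rintro s t hs ht rfl
      rfl
    -- membership of x in its own reference set
    have hself : ∀ x ∈ Set.Icc (1:ℤ) (N:ℤ), x ∈ refS x := by
      intro x hx
      simp only [hrefS, Finset.mem_filter, Finset.mem_Icc, Set.mem_Icc] at hx ⊢
      exact ⟨hx, by simp⟩
    have hrefmin : ∀ x, ∀ hx : x ∈ Set.Icc (1:ℤ) (N:ℤ), ref x = (refS x).min' ⟨x, hself x hx⟩ := by
      intro x hx
      simp only [href]
      exact min'_congr _ _ _ _ (Finset.insert_eq_self.2 (hself x hx))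
    -- config points have the same reference set as a
    have hrefSeq : ∀ x, χ₂ x = χ₂ a → (M₀ ∣ x - a) → refS x = refS a := by
      intro x hcx hdx
      simp only [hrefS]
      apply Finset.filter_congr
      intro z _
      constructor
      · rintro ⟨h1, h2⟩
        refine ⟨by rw [h1, hcx], ?_⟩
        have : z - a = (z - x) + (x - a) := by ring
        rw [this]
        exact dvd_add h2 hdx
      · rintro ⟨h1, h2⟩
        refine ⟨by rw [h1, hcx], ?_⟩
        have : z - x = (z - a) - (x - a) := by ring
        rw [this]
        exact dvd_sub h2 hdx
    -- properties of the common reference point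
    set r₀ : ℤ := ref a with hr₀def
    have hr₀mem : r₀ ∈ refS a := by
      rw [hr₀def, hrefmin a haIcc]
      exact Finset.min'_mem _ _
    have hr₀p : r₀ ∈ Set.Icc (1:ℤ) (N:ℤ) ∧ χ₂ r₀ = χ₂ a ∧ M₀ ∣ (r₀ - a) := by
      have := hr₀mem
      simp only [hrefS, Finset.mem_filter, Finset.mem_Icc] at this
      exact ⟨Set.mem_Icc.2 this.1, this.2.1, this.2.2⟩
    -- collision existence for every admissible point
    have hcoll : ∀ x ∈ Set.Icc (1:ℤ) (N:ℤ), χ₂ x = χ₂ a → (M₀ ∣ x - a) →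
        ∃ jj : Fin (m'+1) × Fin (m'+1), (Δ x).1 jj.1 = (Δ r₀).1 jj.2 := by
      intro x hx hcx hdx
      by_cases hxr : x = r₀
      · exact ⟨(0,0), by rw [hxr]⟩
      have hdvd₀ : M₀ ∣ (r₀ - x) := by
        have : r₀ - x = (r₀ - a) - (x - a) := by ring
        rw [this]
        exact dvd_sub hr₀p.2.2 hdx
      obtain ⟨w, hw⟩ := hdvd₀
      have hw0 : w ≠ 0 := by
        intro hc
        rw [hc, mul_zero] at hw
        apply hxr
        omega
      have hχ₂xr : (Δ r₀).2 = (Δ x).2 := by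
        have h1 : χ₂ r₀ = χ₂ x := by rw [hr₀p.2.1, hcx]
        simpa [hχ₂] using h1
      rcases lt_or_gt_of_ne hw0 with hwneg | hwpos
      · -- r₀ - x = M₀ w with w < 0 : pair (r₀, x)
        have hpt : r₀ + a₁ * (((h:ℤ)+1) * (-w)) = x := by
          have heq : a₁ * (((h:ℤ)+1) * (-w)) = -(M₀ * w) := by rw [hM₀]; ring
          rw [heq]
          linarith [hw]
        have hd'h : (h:ℤ) < ((h:ℤ)+1) * (-w) := by nlinarith
        have hthis := hii
        push_neg at hthis
        have h2 := hthis r₀ (((h:ℤ)+1) * (-w)) hd'h hr₀p.1 (by rw [hpt]; exact hx)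
          (by rw [hpt]; intro hc; exact hxr hc)
        rw [hpt] at h2
        by_contra hnone
        push_neg at hnone
        exact (h2 (fun j j' hc => hnone (j, j') hc)) hχ₂xr.symm
      · -- r₀ - x = M₀ w with w > 0 : pair (x, r₀)
        have hpt : x + a₁ * (((h:ℤ)+1) * w) = r₀ := by
          have heq : a₁ * (((h:ℤ)+1) * w) = M₀ * w := by rw [hM₀]; ring
          rw [heq]
          linarith [hw]
        have hd'h : (h:ℤ) < ((h:ℤ)+1) * w := by nlinarith
        have hthis := hii
        push_neg at hthis
        have h2 := hthis x (((h:ℤ)+1) * w) hd'h hx (by rw [hpt]; exact hr₀p.1)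
          (by rw [hpt]; intro hc; exact hxr hc.symm)
        rw [hpt] at h2
        by_contra hnone
        push_neg at hnone
        exact (h2 (fun j j' hc => hnone (j', j) hc.symm)) hχ₂xr
    -- profile specification
    have hprofspec : ∀ x ∈ Set.Icc (1:ℤ) (N:ℤ), χ₂ x = χ₂ a → (M₀ ∣ x - a) →
        (Δ x).1 (prof x).1 = (Δ r₀).1 (prof x).2 := by
      intro x hx hcx hdx
      have hrx : ref x = r₀ := by
        rw [hrefmin x hx, hr₀def, hrefmin a haIcc]
        exact min'_congr _ _ _ _ (hrefSeq x hcx hdx)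
      have hex : ∃ jj : Fin (m'+1) × Fin (m'+1), (Δ x).1 jj.1 = (Δ (ref x)).1 jj.2 := by
        rw [hrx]
        exact hcoll x hx hcx hdx
      have hpx : (Δ x).1 (prof x).1 = (Δ (ref x)).1 (prof x).2 := by
        have hpc : prof x = hex.choose := by
          simp only [hprof]
          rw [dif_pos hex]
        rw [hpc]
        exact hex.choose_spec
      rw [hrx] at hpx
      exact hpx
    -- finish
    have hpe : ∀ i, prof (a + (p i).eval d) = prof a ∧ χ₂ (a + (p i).eval d) = χ₂ a := by
      intro i
      have hthis := hmono' i
      simp only [hχ] at hthis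
      rw [Prod.mk.injEq] at hthis
      exact ⟨hthis.2, hthis.1⟩
    have hprof_eq : ∀ i, prof (a + (p i).eval d) = prof a := fun i => (hpe i).1
    have hχ₂eq : ∀ i, χ₂ (a + (p i).eval d) = χ₂ a := fun i => (hpe i).2
    refine ⟨a, d, hd0, haIcc, hptsi, (prof a).1, ?_⟩
    intro i
    have hx := hptsi i
    have hpa := hprofspec a haIcc rfl (by simp)
    have hpx := hprofspec (a + (p i).eval d) hx (hχ₂eq i) (by simpa using hdvd i)
    rw [hprof_eq i] at hpx
    rw [hpx, hpa]
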